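/- Let ε ∈ ℝ and let Ω = ℝ² ∖ {(x,0) : x ≤ 0} be the plane with the non-positive real axis removed. Let H : Ω → ℝ be continuously differentiable and satisfy x·∂_yH(x,y) − y·∂_xH(x,y) = 2ε·H(x,y) for all (x,y) ∈ Ω. Then there exists a function H₀ : (0,∞) → ℝ such that H(x,y) = H₀(√(x²+y²)) · exp(2ε·arg(x+iy)) for all (x,y) ∈ Ω, where arg denotes the principal argument of a complex number, taking values in (−π, π]. -/

import Mathlib

open Real Set

/-- Case 7: u-independent pp-wave profile with x∂_y H − y∂_x H = 2εH on the slit plane. -/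
theorem ppwave_case7_invariance
    (ε : ℝ) (H : ℝ → ℝ → ℝ)
    (hH : ContDiffOn ℝ 1 (fun p : ℝ × ℝ => H p.1 p.2)
      {p : ℝ × ℝ | ¬(p.2 = 0 ∧ p.1 ≤ 0)})
    (hpde : ∀ x y : ℝ, ¬(y = 0 ∧ x ≤ 0) →
      x * deriv (fun y' => H x y') y - y * deriv (fun x' => H x' y) x = 2 * ε * H x y) :
    ∃ H₀ : ℝ → ℝ, ∀ x y : ℝ, ¬(y = 0 ∧ x ≤ 0) →
      H x y = H₀ (Real.sqrt (x ^ 2 + y ^ 2))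
        * Real.exp (2 * ε * Complex.arg ((x : ℂ) + (y : ℂ) * Complex.I)) := by
  classical
  set Ω : Set (ℝ × ℝ) := {p : ℝ × ℝ | ¬(p.2 = 0 ∧ p.1 ≤ 0)} with hΩdef
  have hΩopen : IsOpen Ω := by
    have hcl : IsClosed {p : ℝ × ℝ | p.2 = 0 ∧ p.1 ≤ 0} :=
      (isClosed_eq continuous_snd continuous_const).inter
        (isClosed_le continuous_fst continuous_const)
    have : Ω = {p : ℝ × ℝ | p.2 = 0 ∧ p.1 ≤ 0}ᶜ := rfl
    rw [this]; exact hcl.isOpen_compl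
  have hdiff : ∀ p ∈ Ω, DifferentiableAt ℝ (fun p : ℝ × ℝ => H p.1 p.2) p := by
    intro p hp
    exact ((hH.differentiableOn one_ne_zero) p hp).differentiableAt (hΩopen.mem_nhds hp)
  -- derivative statement for the circle curve
  have key : ∀ r : ℝ, 0 < r → ∀ t ∈ Ioo (-π) π,
      HasDerivAt (fun s => H (r * Real.cos s) (r * Real.sin s) * Real.exp (-(2 * ε * s)))
        0 t := by
    intro r hr t ht
    set x0 := r * Real.cos t
    set y0 := r * Real.sin t
    have hmem : ((x0, y0) : ℝ × ℝ) ∈ Ω := by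
      intro hbad
      obtain ⟨h1, h2⟩ := hbad
      have hs : Real.sin t = 0 := by
        have := h1; simp only [y0] at this
        rcases mul_eq_zero.mp this with h | h
        · exact absurd h (ne_of_gt hr)
        · exact h
      have ht0 : t = 0 := by
        rcases Real.sin_eq_zero_iff_of_lt_of_lt ht.1 ht.2 |>.mp hs with h
        exact h
      subst ht0
      simp only [x0, Real.cos_zero, mul_one] at h2
      exact absurd h2 (not_le.mpr hr)
    have hd := hdiff _ hmem
    set f' := fderiv ℝ (fun p : ℝ × ℝ => H p.1 p.2) (x0, y0) with hf'
    -- partial derivatives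
    have hpx : HasDerivAt (fun x' => H x' y0) (f' (1, 0)) x0 := by
      have hcurve : HasDerivAt (fun x' : ℝ => ((x' : ℝ), y0)) ((1 : ℝ), (0 : ℝ)) x0 :=
        (hasDerivAt_id x0).prodMk (hasDerivAt_const x0 y0)
      exact hd.hasFDerivAt.comp_hasDerivAt x0 hcurve
    have hpy : HasDerivAt (fun y' => H x0 y') (f' (0, 1)) y0 := by
      have hcurve : HasDerivAt (fun y' : ℝ => ((x0 : ℝ), y')) ((0 : ℝ), (1 : ℝ)) y0 :=
        (hasDerivAt_const y0 x0).prodMk (hasDerivAt_id y0)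
      exact hd.hasFDerivAt.comp_hasDerivAt y0 hcurve
    have hpde' : x0 * f' (0, 1) - y0 * f' (1, 0) = 2 * ε * H x0 y0 := by
      have := hpde x0 y0 hmem
      rwa [hpy.deriv, hpx.deriv] at this
    -- curve derivative
    have hγ : HasDerivAt (fun s => ((r * Real.cos s : ℝ), (r * Real.sin s : ℝ)))
        ((-(r * Real.sin t) : ℝ), (r * Real.cos t : ℝ)) t := by
      have h1 : HasDerivAt (fun s => r * Real.cos s) (-(r * Real.sin t)) t := by
        simpa [mul_comm, mul_left_comm, mul_assoc] using (Real.hasDerivAt_cos t).const_mul r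
      have h2 : HasDerivAt (fun s => r * Real.sin s) (r * Real.cos t) t :=
        (Real.hasDerivAt_sin t).const_mul r
      exact h1.prodMk h2
    have hcomp : HasDerivAt (fun s => H (r * Real.cos s) (r * Real.sin s))
        (f' ((-(r * Real.sin t) : ℝ), (r * Real.cos t : ℝ))) t :=
      by have h := hd.hasFDerivAt.comp_hasDerivAt t hγ; exact h
    have hval : f' ((-(r * Real.sin t) : ℝ), (r * Real.cos t : ℝ))
        = 2 * ε * H x0 y0 := by
      have hdecomp : ((-(r * Real.sin t) : ℝ), (r * Real.cos t : ℝ))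
          = (-(y0)) • ((1 : ℝ), (0 : ℝ)) + x0 • ((0 : ℝ), (1 : ℝ)) := by
        simp [x0, y0, Prod.ext_iff]
      rw [hdecomp, map_add, map_smul, map_smul, smul_eq_mul, smul_eq_mul]
      rw [← hpde']; ring
    have hexp : HasDerivAt (fun s : ℝ => Real.exp (-(2 * ε * s)))
        (-(2 * ε) * Real.exp (-(2 * ε * t))) t := by
      have h1 : HasDerivAt (fun s : ℝ => -(2 * ε * s)) (-(2 * ε)) t := by
        simpa only [mul_one, neg_mul] using (hasDerivAt_id' t).const_mul (-(2 * ε))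
      have h2 := (Real.hasDerivAt_exp (-(2 * ε * t))).comp t h1
      refine h2.congr_deriv ?_
      ring
    have := hcomp.mul hexp
    rw [hval] at this
    refine this.congr_deriv ?_
    simp only [x0, y0]
    ring
  -- constancy
  have const : ∀ r : ℝ, 0 < r → ∀ θ ∈ Ioo (-π) π,
      H (r * Real.cos θ) (r * Real.sin θ) * Real.exp (-(2 * ε * θ)) = H r 0 := by
    intro r hr θ hθ
    set F : ℝ → ℝ := fun s => H (r * Real.cos s) (r * Real.sin s) * Real.exp (-(2 * ε * s))
      with hF
    have h0 : (0 : ℝ) ∈ Ioo (-π) π := by constructor <;> simpa using Real.pi_pos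
    have hF0 : F 0 = H r 0 := by simp [F]
    rcases le_or_gt 0 θ with hcase | hcase
    · have hsub : Icc (0 : ℝ) θ ⊆ Ioo (-π) π := fun s hs =>
        ⟨lt_of_lt_of_le h0.1 hs.1, lt_of_le_of_lt hs.2 hθ.2⟩
      have := constant_of_has_deriv_right_zero
        (f := F) (a := 0) (b := θ)
        (fun s hs => ((key r hr s (hsub hs)).continuousAt).continuousWithinAt)
        (fun s hs => ((key r hr s (hsub (Ico_subset_Icc_self hs))).hasDerivWithinAt))
        θ ⟨hcase, le_rfl⟩
      rw [← hF0]; exact this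
    · have hsub : Icc θ (0 : ℝ) ⊆ Ioo (-π) π := fun s hs =>
        ⟨lt_of_lt_of_le hθ.1 hs.1, lt_of_le_of_lt hs.2 h0.2⟩
      have := constant_of_has_deriv_right_zero
        (f := F) (a := θ) (b := 0)
        (fun s hs => ((key r hr s (hsub hs)).continuousAt).continuousWithinAt)
        (fun s hs => ((key r hr s (hsub (Ico_subset_Icc_self hs))).hasDerivWithinAt))
        0 ⟨le_of_lt hcase, le_rfl⟩
      rw [← hF0, this]
  refine ⟨fun r => H r 0, fun x y hxy => ?_⟩
  set z : ℂ := (x : ℂ) + (y : ℂ) * Complex.I with hz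
  have hzre : z.re = x := by simp [z]
  have hzim : z.im = y := by simp [z]
  have hzne : z ≠ 0 := by
    intro h
    apply hxy
    constructor
    · rw [← hzim, h]; simp
    · rw [← hzre, h]; simp
  set r := Real.sqrt (x ^ 2 + y ^ 2) with hrdef
  have habs : ‖z‖ = r := by
    rw [Complex.norm_def, Complex.normSq_apply, hzre, hzim, hrdef]
    ring_nf
  have hr : 0 < r := by
    rw [← habs]
    exact norm_pos_iff.mpr hzne
  set θ := Complex.arg z with hθdef
  have hθmem : θ ∈ Ioo (-π) π := by
    refine ⟨Complex.neg_pi_lt_arg z, lt_of_le_of_ne (Complex.arg_le_pi z) ?_⟩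
    intro h
    have := Complex.arg_eq_pi_iff.mp h
    apply hxy
    exact ⟨by rw [← hzim]; exact this.2, by rw [← hzre]; exact le_of_lt this.1⟩
  have hx : x = r * Real.cos θ := by
    rw [← hzre, ← habs, hθdef]; exact (Complex.norm_mul_cos_arg z).symm
  have hy : y = r * Real.sin θ := by
    rw [← hzim, ← habs, hθdef]; exact (Complex.norm_mul_sin_arg z).symm
  have hc := const r hr θ hθmem
  have : H x y = H r 0 * Real.exp (2 * ε * θ) := by
    rw [hx, hy, ← hc]
    rw [mul_assoc, ← Real.exp_add]
    simp
  exact this
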